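/- Let α > 0 and define, for z ∈ ℂ, the function ψ_α(z) := (1/2)·log(2α/(1+z+√((1+z)²+4α²))) (the derivative χ_α' of χ_α). Then for every z ∈ ℂ not of the form −1 + iy with y ∈ ℝ and |y| ≥ 2α, the function ψ_α is complex differentiable at z with derivative ψ_α'(z) = −1/(2·√((1+z)²+4α²)), and moreover Re(−1/(2·√((1+z)²+4α²))) < 0. -/

import Mathlib

open Complex

/-- The principal branch of the complex square root. -/
noncomputable def csqrt (z : ℂ) : ℂ := z ^ (1 / 2 : ℂ)

/-- `ψ_α(z) := (1/2)·log(2α/(1+z+√((1+z)²+4α²)))`, the derivative `χ_α'` of `χ_α`. -/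
noncomputable def psiFun (α : ℝ) (z : ℂ) : ℂ :=
  (1 / 2 : ℂ) * Complex.log (2 * (α : ℂ) / (1 + z + csqrt ((1 + z) ^ 2 + 4 * (α : ℂ) ^ 2)))

lemma csqrt_re_pos {x : ℂ} (hx : x ∈ slitPlane) : 0 < (csqrt x).re := by
  have hx0 : x ≠ 0 := slitPlane_ne_zero hx
  rw [csqrt, Complex.cpow_def_of_ne_zero hx0, Complex.exp_re]
  apply mul_pos (Real.exp_pos _)
  have him : (Complex.log x * (1/2)).im = x.arg / 2 := by
    simp [Complex.mul_im, Complex.log_im]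
    try ring
  rw [him]
  apply Real.cos_pos_of_mem_Ioo
  have h1 : -Real.pi < x.arg := Complex.neg_pi_lt_arg x
  have h2 : x.arg ≠ Real.pi := (Complex.mem_slitPlane_iff_arg.mp hx).1
  have h3 : x.arg < Real.pi := lt_of_le_of_ne (Complex.arg_le_pi x) h2
  constructor <;> [linarith; linarith]

lemma csqrt_mul_self {x : ℂ} (hx0 : x ≠ 0) : csqrt x * csqrt x = x := by
  rw [csqrt, ← Complex.cpow_add _ _ hx0]
  norm_num

lemma psi_deriv_algebra (a w s : ℂ) (hws : w + s ≠ 0) (hs0 : s ≠ 0) (ha : a ≠ 0) :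
    (1/2 : ℂ) * ((2 * a / (w + s))⁻¹ * ((0 * (w + s) - 2 * a * (1 + 1 / (2 * s) * (2 * w))) / (w + s) ^ 2))
      = -1 / (2 * s) := by
  rw [inv_div]
  field_simp
  ring

theorem psiFun_hasDerivAt (α : ℝ) (hα : 0 < α) (z : ℂ)
    (hz : ¬ ∃ y : ℝ, z = -1 + Complex.I * (y : ℂ) ∧ 2 * α ≤ |y|) :
    HasDerivAt (psiFun α) (-1 / (2 * csqrt ((1 + z) ^ 2 + 4 * (α : ℂ) ^ 2))) z ∧
    (-1 / (2 * csqrt ((1 + z) ^ 2 + 4 * (α : ℂ) ^ 2))).re < 0 := by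
  set w : ℂ := 1 + z with hw
  set A : ℂ := w ^ 2 + 4 * (α : ℂ) ^ 2 with hA
  -- A is in the slit plane
  have hAslit : A ∈ slitPlane := by
    rw [Complex.mem_slitPlane_iff]
    by_contra h
    push_neg at h
    obtain ⟨hre, him⟩ := h
    have hAre : A.re = w.re ^ 2 - w.im ^ 2 + 4 * α ^ 2 := by
      simp only [hA, Complex.add_re, pow_two, Complex.mul_re, Complex.mul_im,
        Complex.ofReal_re, Complex.ofReal_im, Complex.re_ofNat, Complex.im_ofNat]
      ring
    have hAim : A.im = 2 * w.re * w.im := by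
      simp only [hA, Complex.add_im, pow_two, Complex.mul_re, Complex.mul_im,
        Complex.ofReal_re, Complex.ofReal_im, Complex.re_ofNat, Complex.im_ofNat]
      ring
    rw [hAre] at hre
    rw [hAim] at him
    have hwim : w.im ^ 2 ≥ w.re ^ 2 + 4 * α ^ 2 := by linarith
    have hwim0 : w.im ≠ 0 := by
      intro h0
      rw [h0] at hwim
      nlinarith
    have hwre : w.re = 0 := by
      rcases mul_eq_zero.mp him with h | h
      · rcases mul_eq_zero.mp h with h' | h'
        · norm_num at h'
        · exact h'
      · exact absurd h hwim0
    apply hz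
    have hzre : z.re = -1 := by
      have : w.re = 1 + z.re := by simp [hw]
      linarith
    have hzim : z.im = w.im := by simp [hw]
    refine ⟨w.im, ?_, ?_⟩
    · apply Complex.ext <;>
        simp [hzre, hzim, Complex.add_re, Complex.add_im, Complex.mul_re, Complex.mul_im]
    · have h4 : 4 * α ^ 2 ≤ w.im ^ 2 := by nlinarith
      nlinarith [_root_.sq_abs w.im, abs_nonneg w.im]
  have hA0 : A ≠ 0 := slitPlane_ne_zero hAslit
  set s : ℂ := csqrt A with hs
  have hsre : 0 < s.re := csqrt_re_pos hAslit
  have hs0 : s ≠ 0 := by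
    intro h
    rw [h] at hsre
    simp at hsre
  have hssq : s * s = A := csqrt_mul_self hA0
  have hα0 : (α : ℂ) ≠ 0 := by exact_mod_cast ne_of_gt hα
  -- w + s ≠ 0
  have hws : w + s ≠ 0 := by
    intro h
    have hsw : s = -w := by linear_combination h
    have h4 : (4 : ℂ) * (α : ℂ) ^ 2 = 0 := by
      have h5 := hssq
      rw [hsw, hA] at h5
      linear_combination -h5
    simp [hα0] at h4
  -- u := 2α/(w+s) in slit plane
  set u : ℂ := 2 * (α : ℂ) / (w + s) with hu
  have hu0 : u ≠ 0 := by
    rw [hu]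
    apply div_ne_zero _ hws
    simp [hα0]
  have hkey : u + u⁻¹ = s / (α : ℂ) := by
    rw [hu, inv_div]
    have h2 : 2 * (α:ℂ) / (w + s) = (s - w) / (2 * α) := by
      rw [div_eq_div_iff hws (by simp [hα0])]
      have h3 : (s - w) * (w + s) = s * s - w^2 := by ring
      rw [h3, hssq, hA]
      ring
    rw [h2]
    field_simp
    ring
  have huslit : u ∈ slitPlane := by
    rw [Complex.mem_slitPlane_iff]
    by_contra h
    push_neg at h
    obtain ⟨hre, him⟩ := h
    have hure : u.re < 0 := by
      rcases lt_or_eq_of_le hre with h | h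
      · exact h
      · exfalso; apply hu0; apply Complex.ext <;> simp [← h, him]
    have hureal : u = (u.re : ℂ) := by
      apply Complex.ext <;> simp [him]
    have hsau : s = (α : ℂ) * (u + u⁻¹) := by
      rw [hkey]; field_simp
    have hsre' : s.re = α * (u.re + (u.re)⁻¹) := by
      rw [hsau, hureal]
      rw [← Complex.ofReal_inv, ← Complex.ofReal_add, ← Complex.ofReal_mul]
      simp
    have hinv : (u.re)⁻¹ < 0 := inv_lt_zero.mpr hure
    nlinarith [hsre, hsre']
  -- derivative computation
  have hconj : HasDerivAt (fun z : ℂ => (1 + z) ^ 2 + 4 * (α : ℂ) ^ 2)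
      (2 * w) z := by
    have h1 : HasDerivAt (fun z : ℂ => 1 + z) 1 z := (hasDerivAt_id z).const_add 1
    have h2 := (h1.pow 2).add_const (4 * (α : ℂ) ^ 2)
    simpa [hw] using h2
  have hsqrtA : HasDerivAt csqrt (1 / (2 * s)) A := by
    have h := (Complex.hasStrictDerivAt_cpow_const (c := (1/2 : ℂ)) hAslit).hasDerivAt
    have heq : (1/2 : ℂ) * A ^ ((1/2 : ℂ) - 1) = 1 / (2 * s) := by
      have h12 : ((1/2 : ℂ) - 1) = -(1/2 : ℂ) := by norm_num
      rw [h12, Complex.cpow_neg]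
      rw [hs, csqrt]
      field_simp
    rw [← heq]
    exact h
  have hcs : HasDerivAt (fun z : ℂ => csqrt ((1 + z) ^ 2 + 4 * (α : ℂ) ^ 2))
      (1 / (2 * s) * (2 * w)) z := by
    have h := HasDerivAt.comp z hsqrtA hconj; exact h
  have hg : HasDerivAt (fun z : ℂ => 1 + z + csqrt ((1 + z) ^ 2 + 4 * (α : ℂ) ^ 2))
      (1 + 1 / (2 * s) * (2 * w)) z :=
    ((hasDerivAt_id z).const_add 1).add hcs
  have hf : HasDerivAt (fun z : ℂ => 2 * (α : ℂ) / (1 + z + csqrt ((1 + z) ^ 2 + 4 * (α : ℂ) ^ 2)))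
      ((0 * (w + s) - 2 * (α : ℂ) * (1 + 1 / (2 * s) * (2 * w))) / (w + s) ^ 2) z :=
    (hasDerivAt_const z (2 * (α : ℂ))).div hg hws
  have hlog := (Complex.hasStrictDerivAt_log huslit).hasDerivAt
  have hcomp : HasDerivAt (fun z : ℂ =>
      Complex.log (2 * (α : ℂ) / (1 + z + csqrt ((1 + z) ^ 2 + 4 * (α : ℂ) ^ 2))))
      (u⁻¹ * ((0 * (w + s) - 2 * (α : ℂ) * (1 + 1 / (2 * s) * (2 * w))) / (w + s) ^ 2)) z := by
    have h := HasDerivAt.comp z hlog hf; exact h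
  have hpsi : HasDerivAt (psiFun α)
      ((1/2 : ℂ) * (u⁻¹ * ((0 * (w + s) - 2 * (α : ℂ) * (1 + 1 / (2 * s) * (2 * w))) / (w + s) ^ 2))) z := by
    unfold psiFun
    exact hcomp.const_mul _
  have hder : (1/2 : ℂ) * (u⁻¹ * ((0 * (w + s) - 2 * (α : ℂ) * (1 + 1 / (2 * s) * (2 * w))) / (w + s) ^ 2))
      = -1 / (2 * s) := by
    rw [hu, show u⁻¹ = (2 * (α:ℂ) / (w + s))⁻¹ from rfl]
    exact psi_deriv_algebra _ _ _ hws hs0 hα0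
  rw [hder] at hpsi
  refine ⟨hpsi, ?_⟩
  show (-1 / (2 * s)).re < 0
  have h2s : (2 : ℂ) * s ≠ 0 := mul_ne_zero two_ne_zero hs0
  have heq : -1 / (2 * s) = -((2 * s)⁻¹) := by field_simp
  rw [heq, Complex.neg_re, Complex.inv_re]
  have h1 : 0 < (2 * s).re := by
    have : ((2 : ℂ) * s).re = 2 * s.re := by
      simp [Complex.mul_re]
    rw [this]; linarith
  have h2 : 0 < Complex.normSq (2 * s) := Complex.normSq_pos.mpr h2s
  have := div_pos h1 h2
  linarith
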